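/- Let g: ℝ^n → ℝ be strictly convex and continuously differentiable, let D(x,y) = g(x) − g(y) − (x − y)ᵀ∇g(y) be the Bregman distance induced by g, and let f: ℝ^n → ℝ be convex and continuously differentiable. Fix y ∈ ℝ^n and suppose x⁺ ∈ ℝ^n minimizes the function x ↦ f(x) + D(x,y) over ℝ^n. Then for every z ∈ ℝ^n, f(z) − f(x⁺) ≥ D(z, x⁺) + D(x⁺, y) − D(z, y). -/

import Mathlib

open Filter Topology

/-- The Bregman distance induced by `g`:
`D(x,y) = g(x) − g(y) − (x − y)ᵀ∇g(y)`. -/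
noncomputable def breg {E : Type*} [NormedAddCommGroup E] [NormedSpace ℝ E]
    (g : E → ℝ) (x y : E) : ℝ :=
  g x - g y - fderiv ℝ g y (x - y)

/-- Gradient inequality for a convex function. -/
lemma convexOn_grad_le {E : Type*} [NormedAddCommGroup E] [NormedSpace ℝ E]
    (f : E → ℝ) (hf : ConvexOn ℝ Set.univ f) (a b : E) (f' : E →L[ℝ] ℝ)
    (hd : HasFDerivAt f f' a) : f' (b - a) ≤ f b - f a := by
  set φ : ℝ → ℝ := fun t => f (a + t • (b - a)) with hφ
  have hline : HasDerivAt (fun t : ℝ => a + t • (b - a)) (b - a) 0 := by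
    simpa using ((hasDerivAt_id (0:ℝ)).smul_const (b - a)).const_add a
  have hder : HasDerivAt φ (f' (b - a)) 0 := by
    have hd' : HasFDerivAt f f' (a + (0:ℝ) • (b - a)) := by simpa using hd
    exact hd'.comp_hasDerivAt 0 hline
  have hslope : Tendsto (slope φ 0) (𝓝[>] 0) (𝓝 (f' (b - a))) :=
    (hasDerivAt_iff_tendsto_slope.mp hder).mono_left
      (nhdsWithin_mono 0 (fun t ht => ne_of_gt ht))
  refine le_of_tendsto hslope ?_
  filter_upwards [Ioc_mem_nhdsGT one_pos] with t ht
  have ht0 : 0 < t := ht.1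
  have ht1 : t ≤ 1 := ht.2
  have hconv := hf.2 (Set.mem_univ a) (Set.mem_univ b)
    (by linarith : (0:ℝ) ≤ 1 - t) (le_of_lt ht0) (by ring)
  have heq : a + t • (b - a) = (1 - t) • a + t • b := by
    rw [smul_sub, sub_smul, one_smul]; abel
  have hφt : φ t ≤ (1 - t) * f a + t * f b := by
    rw [hφ]; simp only [heq]; exact hconv
  have : slope φ 0 t = (φ t - f a) / t := by
    simp [slope, hφ, div_eq_inv_mul]
  rw [this]
  rw [div_le_iff₀ ht0]
  nlinarith [hφt]

/-- the three-point inequality for the proximal step: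
if `x⁺` minimizes `f(·) + D(·, y)`, then
`f(z) − f(x⁺) ≥ D(z, x⁺) + D(x⁺, y) − D(z, y)` for every `z`. -/
theorem stmt7 (n : ℕ) (g f : EuclideanSpace ℝ (Fin n) → ℝ)
    (hg : StrictConvexOn ℝ Set.univ g) (hgdiff : ContDiff ℝ 1 g)
    (hfconv : ConvexOn ℝ Set.univ f) (hfdiff : ContDiff ℝ 1 f)
    (y xplus : EuclideanSpace ℝ (Fin n))
    (hmin : ∀ x, f xplus + breg g xplus y ≤ f x + breg g x y) :
    ∀ z, breg g z xplus + breg g xplus y - breg g z y ≤ f z - f xplus := by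
  intro z
  set F := fderiv ℝ f xplus with hF
  set Gp := fderiv ℝ g xplus with hGp
  set Gy := fderiv ℝ g y with hGy
  have hfd : HasFDerivAt f F xplus :=
    ((hfdiff.differentiable one_ne_zero) xplus).hasFDerivAt
  have hgd : HasFDerivAt g Gp xplus :=
    ((hgdiff.differentiable one_ne_zero) xplus).hasFDerivAt
  -- derivative of the objective at the minimizer is zero
  have hobj : HasFDerivAt (fun x => f x + breg g x y) (F + Gp - Gy) xplus := by
    have h1 : HasFDerivAt (fun x : EuclideanSpace ℝ (Fin n) => Gy (x - y)) Gy xplus := by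
      simpa [Function.comp_def, map_sub] using (Gy.hasFDerivAt.comp xplus ((hasFDerivAt_id xplus).sub_const y))
    have : HasFDerivAt (fun x => f x + (g x - g y - Gy (x - y))) (F + Gp - Gy) xplus := by
      have := (hfd.add ((hgd.sub_const (g y)).sub h1))
      refine this.congr_fderiv ?_
      ext v
      simp
      ring
    simpa [breg] using this
  have hzero : F + Gp - Gy = 0 := by
    have hlm : IsLocalMin (fun x => f x + breg g x y) xplus :=
      Filter.Eventually.of_forall hmin
    exact hlm.hasFDerivAt_eq_zero hobj
  have hkey : Gy (z - xplus) - Gp (z - xplus) = F (z - xplus) := by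
    have h0 : (F + Gp - Gy) (z - xplus) = 0 := by rw [hzero]; simp
    simp only [ContinuousLinearMap.sub_apply, ContinuousLinearMap.add_apply] at h0
    linarith
  have hconv : F (z - xplus) ≤ f z - f xplus :=
    convexOn_grad_le f hfconv xplus z F hfd
  have hbreg : breg g z xplus + breg g xplus y - breg g z y
      = Gy (z - xplus) - Gp (z - xplus) := by
    simp only [breg, ← hGp, ← hGy]
    have : Gy (z - y) - Gy (xplus - y) = Gy (z - xplus) := by
      rw [← map_sub]; congr 1; abel
    linarith
  rw [hbreg, hkey]
  exact hconv
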